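/- Let Θ₁, Θ₂, Λ be frames of a family of compatible frames with Θ₁ ⊥ Θ₂ | Λ, and let p be a probability potential with d(p) = Θ₁ ∨ Θ₂ ∨ Λ. Then the following statements are all equivalent: (1) p = q₁ · q₂ for some potentials q₁, q₂ with d(q₁) = Θ₁ ∨ Λ and d(q₂) = Θ₂ ∨ Λ; (2) p = p_{Θ₁|Λ} · p_{Θ₂|Λ} · π_Λ(p); (3) p_{Θ₁∨Θ₂|Λ} = p_{Θ₁|Λ} · p_{Θ₂|Λ}; (4) p_{Θ₁∨Θ₂|Λ} = p₁ · p₂ for some potentials p₁, p₂ with d(p₁) = Θ₁ ∨ Λ and d(p₂) = Θ₂ ∨ Λ; (5) p · π_Λ(p) = π_{Θ₁∨Λ}(p) · π_{Θ₂∨Λ}(p); (6) p = p_{Θ₁|Λ} · π_{Θ₂∨Λ}(p); (7) p_{Θ₁|Θ₂∨Λ} = p_{Θ₁|Λ} · f_{π_{Θ₂∨Λ}(p)}; (8) p_{Θ₁|Θ₂∨Λ} = q · f_{π_{Θ₂∨Λ}(p)} for some potential q with d(q) = Θ₁ ∨ Λ. -/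

import Mathlib

open scoped NNReal

/-- A family of compatible frames (f.c.f.): a collection of finite nonempty frames
together with (unique) refinings between them, closed under composition, containing
identities, with minimal common refinements (binary joins). -/
structure FCF where
  /-- the frames of the family -/
  Frame : Type
  /-- the elements of each frame -/
  El : Frame → Type
  elFintype : ∀ Θ, Fintype (El Θ)
  elNonempty : ∀ Θ, Nonempty (El Θ)
  /-- `le Θ Λ` holds iff the family contains a refining of `Θ` to `Λ`. -/
  le : Frame → Frame → Prop
  le_refl : ∀ Θ, le Θ Θ
  le_trans : ∀ {Θ Λ Ξ}, le Θ Λ → le Λ Ξ → le Θ Ξ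
  le_antisymm : ∀ {Θ Λ}, le Θ Λ → le Λ Θ → Θ = Λ
  /-- the (unique) refining map of `Θ` to `Λ`, when `le Θ Λ` -/
  τ : ∀ {Θ Λ}, le Θ Λ → El Θ → Set (El Λ)
  τ_nonempty : ∀ {Θ Λ} (h : le Θ Λ) (θ : El Θ), (τ h θ).Nonempty
  τ_disjoint : ∀ {Θ Λ} (h : le Θ Λ) (θ θ' : El Θ), θ ≠ θ' → τ h θ ∩ τ h θ' = ∅
  τ_cover : ∀ {Θ Λ} (h : le Θ Λ) (x : El Λ), ∃ θ, x ∈ τ h θ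
  /-- the identity refining -/
  τ_refl : ∀ {Θ} (h : le Θ Θ) (θ : El Θ), τ h θ = {θ}
  /-- closure under composition of refinings -/
  τ_comp : ∀ {Θ Λ Ξ} (h₁ : le Θ Λ) (h₂ : le Λ Ξ) (h₃ : le Θ Ξ) (θ : El Θ),
    τ h₃ θ = ⋃ lam ∈ τ h₁ θ, τ h₂ lam
  /-- identity of coarsenings: two coarsenings of a frame with the same blocks coincide -/
  coarsening_unique : ∀ {Θ₁ Θ₂ Λ} (h₁ : le Θ₁ Λ) (h₂ : le Θ₂ Λ),
    (∀ θ₁, ∃ θ₂, τ h₁ θ₁ = τ h₂ θ₂) → (∀ θ₂, ∃ θ₁, τ h₁ θ₁ = τ h₂ θ₂) → Θ₁ = Θ₂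
  /-- minimal common refinement of two frames -/
  sup : Frame → Frame → Frame
  le_sup_left : ∀ Θ Λ, le Θ (sup Θ Λ)
  le_sup_right : ∀ Θ Λ, le Λ (sup Θ Λ)
  sup_le : ∀ {Θ Λ Ξ}, le Θ Ξ → le Λ Ξ → le (sup Θ Λ) Ξ
  /-- every element of the minimal common refinement is the (unique) intersection point
  of a block of each factor -/
  sup_atom : ∀ {Θ Λ} (h₁ : le Θ (sup Θ Λ)) (h₂ : le Λ (sup Θ Λ)) (x : El (sup Θ Λ)),
    ∃ (θ : El Θ) (lam : El Λ), τ h₁ θ ∩ τ h₂ lam = {x}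

namespace FCF

instance (F : FCF) (Θ : F.Frame) : Fintype (F.El Θ) := F.elFintype Θ

instance (F : FCF) (Θ : F.Frame) : Nonempty (F.El Θ) := F.elNonempty Θ

instance instSemilatticeSup (F : FCF) : SemilatticeSup F.Frame where
  le := F.le
  le_refl := F.le_refl
  le_trans := fun _ _ _ => F.le_trans
  le_antisymm := fun _ _ => F.le_antisymm
  sup := F.sup
  le_sup_left := F.le_sup_left
  le_sup_right := F.le_sup_right
  sup_le := fun _ _ _ h h' => F.sup_le h h'

/-- the indicator potential `f_p` of the support of a potential -/
noncomputable def fpot {X : Type} (p : X → ℝ≥0) : X → ℝ≥0 := fun x =>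
  haveI := Classical.propDecidable (0 < p x)
  if 0 < p x then 1 else 0

/-- the support of a potential -/
def psupp {X : Type} (p : X → ℝ≥0) : Set X := {x | 0 < p x}

/-- the likelihood (plausibility of singletons) function of a set potential -/
noncomputable def plfn {X : Type} (m : Set X → ℝ≥0) : X → ℝ≥0 :=
  fun x => ∑ᶠ (S : Set X) (_ : x ∈ S), m S

variable (F : FCF)

/-- `θ` and `lam` are compatible: their refinings to the minimal common refinement
of the two frames intersect. -/
def compat {Θ Λ : F.Frame} (θ : F.El Θ) (lam : F.El Λ) : Prop :=
  (F.τ (F.le_sup_left Θ Λ) θ ∩ F.τ (F.le_sup_right Θ Λ) lam).Nonempty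

/-- `(θ₁, θ₂, lam) ∈ R(Θ₁, Θ₂, Λ)`: joint compatibility of a triple. -/
def compat3 {Θ₁ Θ₂ Λ : F.Frame} (θ₁ : F.El Θ₁) (θ₂ : F.El Θ₂) (lam : F.El Λ) : Prop :=
  (F.τ (F.le_trans (F.le_sup_left Θ₁ Θ₂) (F.le_sup_left (F.sup Θ₁ Θ₂) Λ)) θ₁ ∩
    F.τ (F.le_trans (F.le_sup_right Θ₁ Θ₂) (F.le_sup_left (F.sup Θ₁ Θ₂) Λ)) θ₂ ∩
    F.τ (F.le_sup_right (F.sup Θ₁ Θ₂) Λ) lam).Nonempty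

/-- `Θ₁ ⊥ Θ₂ | Λ` : conditional independence of two frames given a third,
`R_λ(Θ₁,Θ₂) = R_λ(Θ₁) × R_λ(Θ₂)` for every `λ ∈ Λ`. -/
def CondIndep (Θ₁ Θ₂ Λ : F.Frame) : Prop :=
  ∀ (lam : F.El Λ) (θ₁ : F.El Θ₁) (θ₂ : F.El Θ₂),
    F.compat3 θ₁ θ₂ lam ↔ (F.compat θ₁ lam ∧ F.compat θ₂ lam)

/-- joint compatibility of a family of elements together with `lam`. -/
def compatFam {ι : Type} {Θ : ι → F.Frame} {Λ : F.Frame}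
    (θ : ∀ i, F.El (Θ i)) (lam : F.El Λ) : Prop :=
  ∃ (Ξ : F.Frame) (hΘ : ∀ i, F.le (Θ i) Ξ) (hΛ : F.le Λ Ξ) (x : F.El Ξ),
    (∀ i, x ∈ F.τ (hΘ i) (θ i)) ∧ x ∈ F.τ hΛ lam

/-- `⊥ {Θ_i : i ∈ ι} | Λ` : conditional independence of a family of frames given `Λ`,
`R_λ(Θ₁,…,Θₙ) = R_λ(Θ₁) × ⋯ × R_λ(Θₙ)` for every `λ ∈ Λ`. -/
def CondIndepFam {ι : Type} (Θ : ι → F.Frame) (Λ : F.Frame) : Prop :=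
  ∀ (lam : F.El Λ) (θ : ∀ i, F.El (Θ i)),
    F.compatFam θ lam ↔ ∀ i, F.compat (θ i) lam

/-- `t_Λ(x)`, the unique element of the coarsening `Λ` whose block contains `x`. -/
noncomputable def proj {Λ Θ : F.Frame} (h : F.le Λ Θ) (x : F.El Θ) : F.El Λ :=
  (F.τ_cover h x).choose

/-- probability potentials on the frame `Θ` -/
abbrev Pot (Θ : F.Frame) : Type := F.El Θ → ℝ≥0

/-- the combination of two probability potentials, on the join of their domains -/
noncomputable def combine {Θ₁ Θ₂ : F.Frame} (p₁ : F.Pot Θ₁) (p₂ : F.Pot Θ₂) :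
    F.Pot (F.sup Θ₁ Θ₂) :=
  fun x => p₁ (F.proj (F.le_sup_left Θ₁ Θ₂) x) * p₂ (F.proj (F.le_sup_right Θ₁ Θ₂) x)

/-- the transport `π_Λ(p)` of a probability potential to the frame `Λ` -/
noncomputable def transport {Θ : F.Frame} (p : F.Pot Θ) (Λ : F.Frame) : F.Pot Λ :=
  fun lam => ∑ᶠ (θ : F.El Θ) (_ : F.compat θ lam), p θ

/-- the max-transport `t^max_Λ(p)` of a probability potential to the frame `Λ` -/
noncomputable def maxTransport {Θ : F.Frame} (p : F.Pot Θ) (Λ : F.Frame) : F.Pot Λ :=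
  fun lam => ⨆ (θ : F.El Θ) (_ : F.compat θ lam), p θ

/-- combination of two set potentials, on the join of their domains -/
noncomputable def setCombine {Θ₁ Θ₂ : F.Frame} (m₁ : Set (F.El Θ₁) → ℝ≥0)
    (m₂ : Set (F.El Θ₂) → ℝ≥0) : Set (F.El (F.sup Θ₁ Θ₂)) → ℝ≥0 :=
  fun S => ∑ᶠ (S₁ : Set (F.El Θ₁)) (S₂ : Set (F.El Θ₂))
    (_ : (⋃ θ ∈ S₁, F.τ (F.le_sup_left Θ₁ Θ₂) θ) ∩
         (⋃ θ ∈ S₂, F.τ (F.le_sup_right Θ₁ Θ₂) θ) = S),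
    m₁ S₁ * m₂ S₂

/-- the conditional `p_{Θ|Λ} = π_Θ(p) · (π_Λ(p))⁻¹` of `p` for `Θ` given `Λ ≤ Θ` -/
noncomputable def condl {Δ : F.Frame} (p : F.Pot Δ) {Λ Θ : F.Frame} (h : F.le Λ Θ) :
    F.Pot Θ :=
  fun θ => F.transport p Θ θ * (F.transport p Λ (F.proj h θ))⁻¹

/-- the conditional `p_{Θ|Λ} = π_{Θ∨Λ}(p) · (π_Λ(p))⁻¹` of `p` for arbitrary `Θ` given `Λ` -/
noncomputable def condl2 {Δ : F.Frame} (p : F.Pot Δ) (Θ Λ : F.Frame) :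
    F.Pot (F.sup Θ Λ) :=
  fun x => F.transport p (F.sup Θ Λ) x *
    (F.transport p Λ (F.proj (F.le_sup_right Θ Λ) x))⁻¹

/-- the solution set `s_p^Λ(lam)`: maximizers of `p` among elements compatible with `lam` -/
noncomputable def solSet {Θ : F.Frame} (p : F.Pot Θ) (Λ : F.Frame) (lam : F.El Λ) :
    Set (F.El Θ) :=
  {θ | F.compat θ lam ∧ p θ = F.maxTransport p Λ lam}

end FCF

namespace FCF

variable {F : FCF}

lemma mem_tau_proj {Λ Θ : F.Frame} (h : F.le Λ Θ) (x : F.El Θ) :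
    x ∈ F.τ h (F.proj h x) := (F.τ_cover h x).choose_spec

lemma proj_eq_of_mem {Λ Θ : F.Frame} (h : F.le Λ Θ) {lam : F.El Λ} {x : F.El Θ}
    (hx : x ∈ F.τ h lam) : F.proj h x = lam := by
  by_contra hne
  have hd := F.τ_disjoint h _ _ hne
  have : x ∈ F.τ h (F.proj h x) ∩ F.τ h lam := ⟨mem_tau_proj h x, hx⟩
  rw [hd] at this
  exact this

lemma proj_refl {Θ : F.Frame} (h : F.le Θ Θ) (x : F.El Θ) : F.proj h x = x :=
  proj_eq_of_mem h (by rw [F.τ_refl h x]; rfl)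

lemma proj_comp {A B C : F.Frame} (h₁ : F.le A B) (h₂ : F.le B C) (h₃ : F.le A C)
    (x : F.El C) : F.proj h₁ (F.proj h₂ x) = F.proj h₃ x := by
  refine (proj_eq_of_mem h₃ ?_).symm
  rw [F.τ_comp h₁ h₂ h₃]
  exact Set.mem_biUnion (mem_tau_proj h₁ (F.proj h₂ x)) (mem_tau_proj h₂ x)

lemma compat_iff {Θ Λ : F.Frame} (h : F.le Λ Θ) (θ : F.El Θ) (lam : F.El Λ) :
    F.compat θ lam ↔ F.proj h θ = lam := by
  have hcomp := F.τ_comp h (F.le_sup_left Θ Λ) (F.le_sup_right Θ Λ) lam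
  constructor
  · rintro ⟨x, hx1, hx2⟩
    rw [hcomp] at hx2
    simp only [Set.mem_iUnion, exists_prop] at hx2
    obtain ⟨θ', hθ', hxθ'⟩ := hx2
    rcases eq_or_ne θ θ' with rfl | hne
    · exact proj_eq_of_mem h hθ'
    · have hd := F.τ_disjoint (F.le_sup_left Θ Λ) θ θ' hne
      have : x ∈ F.τ (F.le_sup_left Θ Λ) θ ∩ F.τ (F.le_sup_left Θ Λ) θ' := ⟨hx1, hxθ'⟩
      rw [hd] at this
      exact absurd this (Set.notMem_empty x)
  · rintro rfl
    obtain ⟨x, hx⟩ := F.τ_nonempty (F.le_sup_left Θ Λ) θ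
    refine ⟨x, hx, ?_⟩
    rw [hcomp]
    exact Set.mem_biUnion (mem_tau_proj h θ) hx

open Classical in
lemma transport_eq {Θ Λ : F.Frame} (p : F.Pot Θ) (h : F.le Λ Θ) (lam : F.El Λ) :
    F.transport p Λ lam = ∑ θ ∈ Finset.univ.filter (fun θ => F.proj h θ = lam), p θ := by
  refine finsum_cond_eq_sum_of_cond_iff p ?_
  intro x _
  simp [compat_iff h, Finset.mem_filter]

lemma transport_self {Θ : F.Frame} (p : F.Pot Θ) (x : F.El Θ) :
    F.transport p Θ x = p x := by
  classical
  rw [transport_eq p (F.le_refl Θ)]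
  rw [show Finset.univ.filter (fun θ => F.proj (F.le_refl Θ) θ = x) = {x} by
    ext θ; simp [proj_refl]]
  exact Finset.sum_singleton _ _

lemma le_transport {Θ Λ : F.Frame} (p : F.Pot Θ) (h : F.le Λ Θ) (x : F.El Θ) :
    p x ≤ F.transport p Λ (F.proj h x) := by
  classical
  rw [transport_eq p h]
  exact Finset.single_le_sum (fun i _ => zero_le) (by simp)

lemma transport_of_ge {Θ Λ : F.Frame} (p : F.Pot Θ) (h : F.le Λ Θ) (h' : F.le Θ Λ)
    (lam : F.El Λ) : F.transport p Λ lam = p (F.proj h' lam) := by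
  classical
  rw [transport_eq p h]
  rw [show Finset.univ.filter (fun θ => F.proj h θ = lam) = {F.proj h' lam} by
    ext θ
    simp only [Finset.mem_filter, Finset.mem_univ, true_and, Finset.mem_singleton]
    constructor
    · rintro rfl
      rw [proj_comp h' h (F.le_refl Θ), proj_refl]
    · rintro rfl
      rw [proj_comp h h' (F.le_refl Λ), proj_refl]]
  exact Finset.sum_singleton _ _

lemma sup_ext {Θ Λ : F.Frame} {x y : F.El (F.sup Θ Λ)}
    (e1 : F.proj (F.le_sup_left Θ Λ) x = F.proj (F.le_sup_left Θ Λ) y)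
    (e2 : F.proj (F.le_sup_right Θ Λ) x = F.proj (F.le_sup_right Θ Λ) y) : x = y := by
  obtain ⟨θ, lam, hset⟩ := F.sup_atom (F.le_sup_left Θ Λ) (F.le_sup_right Θ Λ) x
  have hx : x ∈ F.τ (F.le_sup_left Θ Λ) θ ∩ F.τ (F.le_sup_right Θ Λ) lam := by
    rw [hset]; rfl
  have h1 : F.proj (F.le_sup_left Θ Λ) x = θ := proj_eq_of_mem _ hx.1
  have h2 : F.proj (F.le_sup_right Θ Λ) x = lam := proj_eq_of_mem _ hx.2
  have hy : y ∈ F.τ (F.le_sup_left Θ Λ) θ ∩ F.τ (F.le_sup_right Θ Λ) lam := by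
    constructor
    · rw [← h1, e1]; exact mem_tau_proj _ y
    · rw [← h2, e2]; exact mem_tau_proj _ y
  rw [hset] at hy
  exact hy.symm

open Finset in
open Classical in
theorem abstract_tfae {X A B L : Type} [Fintype X] [Fintype A] [Fintype B]
    (a : X → A) (b : X → B) (lA : A → L) (lB : B → L)
    (P : A → ℝ≥0) (Q : B → ℝ≥0) (N : L → ℝ≥0) (p : X → ℝ≥0)
    (hl : ∀ x, lA (a x) = lB (b x))
    (inj : ∀ x y : X, a x = a y → b x = b y → x = y)
    (joint : ∀ (α : A) (β : B), lA α = lB β → ∃ x, a x = α ∧ b x = β)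
    (hP : ∀ α, P α = ∑ x ∈ univ.filter (fun x => a x = α), p x)
    (hQ : ∀ β, Q β = ∑ x ∈ univ.filter (fun x => b x = β), p x)
    (hN : ∀ t, N t = ∑ x ∈ univ.filter (fun x => lA (a x) = t), p x) :
    List.TFAE
      [ (∃ (q₁ : A → ℝ≥0) (q₂ : B → ℝ≥0), ∀ x, p x = q₁ (a x) * q₂ (b x)),
        (∀ x, p x = P (a x) * (N (lA (a x)))⁻¹ * (Q (b x) * (N (lB (b x)))⁻¹) * N (lA (a x))),
        (∀ x, p x * (N (lA (a x)))⁻¹ =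
          P (a x) * (N (lA (a x)))⁻¹ * (Q (b x) * (N (lB (b x)))⁻¹)),
        (∃ (p₁ : A → ℝ≥0) (p₂ : B → ℝ≥0), ∀ x, p x * (N (lA (a x)))⁻¹ = p₁ (a x) * p₂ (b x)),
        (∀ x, p x * N (lA (a x)) = P (a x) * Q (b x)),
        (∀ x, p x = P (a x) * (N (lA (a x)))⁻¹ * Q (b x)),
        (∀ x, p x * (Q (b x))⁻¹ = P (a x) * (N (lA (a x)))⁻¹ * fpot Q (b x)),
        (∃ q : A → ℝ≥0, ∀ x, p x * (Q (b x))⁻¹ = q (a x) * fpot Q (b x)) ] := by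
  classical
  -- reindexing of fiber sums
  have sumA : ∀ (α : A) (g : X → ℝ≥0) (g' : B → ℝ≥0), (∀ x, a x = α → g x = g' (b x)) →
      ∑ x ∈ univ.filter (fun x => a x = α), g x
        = ∑ β ∈ univ.filter (fun β => lB β = lA α), g' β := by
    intro α g g' hg
    refine Finset.sum_bij' (fun x _ => b x)
      (fun β hβ => (joint α β ((Finset.mem_filter.mp hβ).2.symm)).choose)
      ?_ ?_ ?_ ?_ ?_
    · intro x hx
      have hx' : a x = α := (Finset.mem_filter.mp hx).2
      simp only [Finset.mem_filter, Finset.mem_univ, true_and]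
      rw [← hl x, hx']
    · intro β hβ
      simp only [Finset.mem_filter, Finset.mem_univ, true_and]
      exact (joint α β ((Finset.mem_filter.mp hβ).2.symm)).choose_spec.1
    · intro x hx
      have hx' : a x = α := (Finset.mem_filter.mp hx).2
      have hspec := (joint α (b x) (by rw [← hx', hl x])).choose_spec
      exact inj _ _ (hspec.1.trans hx'.symm) hspec.2
    · intro β hβ
      exact (joint α β ((Finset.mem_filter.mp hβ).2.symm)).choose_spec.2
    · intro x hx
      exact hg x (Finset.mem_filter.mp hx).2
  have sumB : ∀ (β : B) (g : X → ℝ≥0) (g' : A → ℝ≥0), (∀ x, b x = β → g x = g' (a x)) →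
      ∑ x ∈ univ.filter (fun x => b x = β), g x
        = ∑ α ∈ univ.filter (fun α => lA α = lB β), g' α := by
    intro β g g' hg
    refine Finset.sum_bij' (fun x _ => a x)
      (fun α hα => (joint α β ((Finset.mem_filter.mp hα).2)).choose)
      ?_ ?_ ?_ ?_ ?_
    · intro x hx
      have hx' : b x = β := (Finset.mem_filter.mp hx).2
      simp only [Finset.mem_filter, Finset.mem_univ, true_and]
      rw [hl x, hx']
    · intro α hα
      simp only [Finset.mem_filter, Finset.mem_univ, true_and]
      exact (joint α β ((Finset.mem_filter.mp hα).2)).choose_spec.2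
    · intro x hx
      have hx' : b x = β := (Finset.mem_filter.mp hx).2
      have hspec := (joint (a x) β (by rw [← hx', hl x])).choose_spec
      exact inj _ _ hspec.1 (hspec.2.trans hx'.symm)
    · intro α hα
      exact (joint α β ((Finset.mem_filter.mp hα).2)).choose_spec.1
    · intro x hx
      exact hg x (Finset.mem_filter.mp hx).2
  have sumL : ∀ (t : L) (f : A → ℝ≥0) (g : B → ℝ≥0),
      ∑ x ∈ univ.filter (fun x => lA (a x) = t), f (a x) * g (b x)
        = (∑ α ∈ univ.filter (fun α => lA α = t), f α)
          * (∑ β ∈ univ.filter (fun β => lB β = t), g β) := by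
    intro t f g
    rw [Finset.sum_mul_sum, ← Finset.sum_product']
    have hqpf : ∀ q : A × B,
        q ∈ univ.filter (fun α => lA α = t) ×ˢ univ.filter (fun β => lB β = t) →
          lA q.1 = lB q.2 := by
      intro q hq
      have hq' := Finset.mem_product.mp hq
      rw [(Finset.mem_filter.mp hq'.1).2, (Finset.mem_filter.mp hq'.2).2]
    refine Finset.sum_bij' (fun x (_ : x ∈ univ.filter (fun x => lA (a x) = t)) => (a x, b x))
      (fun q hq => (joint q.1 q.2 (hqpf q hq)).choose)
      ?_ ?_ ?_ ?_ ?_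
    · intro x hx
      have hx' : lA (a x) = t := (Finset.mem_filter.mp hx).2
      rw [Finset.mem_product]
      constructor
      · simp only [Finset.mem_filter, Finset.mem_univ, true_and]; exact hx'
      · simp only [Finset.mem_filter, Finset.mem_univ, true_and]; rw [← hl x]; exact hx'
    · intro q hq
      simp only [Finset.mem_filter, Finset.mem_univ, true_and]
      have hspec := (joint q.1 q.2 (hqpf q hq)).choose_spec
      rw [hspec.1]
      exact (Finset.mem_filter.mp (Finset.mem_product.mp hq).1).2
    · intro x hx
      have hspec := (joint (a x) (b x) (hl x)).choose_spec
      exact inj _ _ hspec.1 hspec.2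
    · intro q hq
      have hspec := (joint q.1 q.2 (hqpf q hq)).choose_spec
      ext <;> simp [hspec.1, hspec.2]
    · intro x hx; rfl
  -- pointwise bounds
  have hNl : ∀ x, p x ≤ N (lA (a x)) := by
    intro x
    rw [hN]
    exact Finset.single_le_sum (fun i _ => zero_le) (by simp)
  have hQb : ∀ x, p x ≤ Q (b x) := by
    intro x
    rw [hQ]
    exact Finset.single_le_sum (fun i _ => zero_le) (by simp)
  have hPN : ∀ α, P α ≤ N (lA α) := by
    intro α
    rw [hP, hN]
    refine Finset.sum_le_sum_of_subset ?_
    intro x hx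
    simp only [Finset.mem_filter, Finset.mem_univ, true_and] at hx ⊢
    rw [hx]
  tfae_have 1 → 5 := by
    rintro ⟨q₁, q₂, hq⟩ x
    have eP : P (a x) = q₁ (a x) * ∑ β ∈ univ.filter (fun β => lB β = lA (a x)), q₂ β := by
      rw [hP, sumA (a x) p (fun β => q₁ (a x) * q₂ β) (fun y hy => by rw [hq y, hy]),
        ← Finset.mul_sum]
    have eQ : Q (b x)
        = (∑ α ∈ univ.filter (fun α => lA α = lB (b x)), q₁ α) * q₂ (b x) := by
      rw [hQ, sumB (b x) p (fun α => q₁ α * q₂ (b x)) (fun y hy => by rw [hq y, hy]),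
        ← Finset.sum_mul]
    have eN : N (lA (a x))
        = (∑ α ∈ univ.filter (fun α => lA α = lA (a x)), q₁ α)
          * (∑ β ∈ univ.filter (fun β => lB β = lA (a x)), q₂ β) := by
      rw [hN, Finset.sum_congr rfl (fun y _ => hq y), sumL]
    rw [hq x, eP, eQ, eN, ← hl x]
    ring
  tfae_have 5 → 6 := by
    intro h5 x
    by_cases hN0 : N (lA (a x)) = 0
    · have hp0 : p x = 0 := le_zero_iff.mp ((hNl x).trans hN0.le)
      have hP0 : P (a x) = 0 := le_zero_iff.mp ((hPN (a x)).trans hN0.le)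
      rw [hp0, hP0, zero_mul, zero_mul]
    · have h := h5 x
      have h2 : p x * N (lA (a x)) * (N (lA (a x)))⁻¹
          = P (a x) * Q (b x) * (N (lA (a x)))⁻¹ := by rw [h]
      rw [mul_assoc, mul_inv_cancel₀ hN0, mul_one] at h2
      rw [h2]; ring
  tfae_have 6 → 2 := by
    intro h6 x
    by_cases hN0 : N (lA (a x)) = 0
    · have hp0 : p x = 0 := le_zero_iff.mp ((hNl x).trans hN0.le)
      rw [hp0, hN0, mul_zero]
    · rw [← hl x, h6 x, mul_assoc (P (a x) * (N (lA (a x)))⁻¹),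
        mul_assoc (Q (b x)), inv_mul_cancel₀ hN0, mul_one]
  tfae_have 2 → 3 := by
    intro h2 x
    by_cases hN0 : N (lA (a x)) = 0
    · rw [hN0]; simp
    · rw [h2 x, mul_assoc, mul_inv_cancel₀ hN0, mul_one]
  tfae_have 3 → 4 := by
    intro h3
    exact ⟨fun α => P α * (N (lA α))⁻¹, fun β => Q β * (N (lB β))⁻¹, h3⟩
  tfae_have 4 → 6 := by
    rintro ⟨p₁, p₂, h4⟩ x
    by_cases hN0 : N (lA (a x)) = 0
    · have hp0 : p x = 0 := le_zero_iff.mp ((hNl x).trans hN0.le)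
      have hP0 : P (a x) = 0 := le_zero_iff.mp ((hPN (a x)).trans hN0.le)
      rw [hp0, hP0, zero_mul, zero_mul]
    · have eP : P (a x) * (N (lA (a x)))⁻¹
          = p₁ (a x) * ∑ β ∈ univ.filter (fun β => lB β = lA (a x)), p₂ β := by
        have e1 : ∑ y ∈ univ.filter (fun y => a y = a x), p y * (N (lA (a y)))⁻¹
            = ∑ β ∈ univ.filter (fun β => lB β = lA (a x)), p₁ (a x) * p₂ β :=
          sumA (a x) _ (fun β => p₁ (a x) * p₂ β)
            (fun y hy => by rw [h4 y, hy])
        have e2 : ∑ y ∈ univ.filter (fun y => a y = a x), p y * (N (lA (a y)))⁻¹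
            = P (a x) * (N (lA (a x)))⁻¹ := by
          rw [Finset.sum_congr rfl
            (fun y hy => by rw [(Finset.mem_filter.mp hy).2]), ← Finset.sum_mul, ← hP]
        rw [← e2, e1, ← Finset.mul_sum]
      have eQ : Q (b x) * (N (lA (a x)))⁻¹
          = (∑ α ∈ univ.filter (fun α => lA α = lA (a x)), p₁ α) * p₂ (b x) := by
        have e1 : ∑ y ∈ univ.filter (fun y => b y = b x), p y * (N (lA (a y)))⁻¹
            = ∑ α ∈ univ.filter (fun α => lA α = lB (b x)), p₁ α * p₂ (b x) :=
          sumB (b x) _ (fun α => p₁ α * p₂ (b x))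
            (fun y hy => by rw [h4 y, hy])
        have e2 : ∑ y ∈ univ.filter (fun y => b y = b x), p y * (N (lA (a y)))⁻¹
            = Q (b x) * (N (lA (a x)))⁻¹ := by
          rw [Finset.sum_congr rfl
            (fun y hy => by rw [hl y, (Finset.mem_filter.mp hy).2, ← hl x]),
            ← Finset.sum_mul, ← hQ]
        rw [← e2, e1, ← Finset.sum_mul, ← hl x]
      have eS : (∑ α ∈ univ.filter (fun α => lA α = lA (a x)), p₁ α)
          * (∑ β ∈ univ.filter (fun β => lB β = lA (a x)), p₂ β) = 1 := by
        have e1 : ∑ y ∈ univ.filter (fun y => lA (a y) = lA (a x)), p₁ (a y) * p₂ (b y)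
            = N (lA (a x)) * (N (lA (a x)))⁻¹ := by
          rw [Finset.sum_congr rfl (fun y hy => by
            rw [← h4 y, (Finset.mem_filter.mp hy).2]), ← Finset.sum_mul, ← hN]
        rw [← sumL, e1, mul_inv_cancel₀ hN0]
      have hx : p x = p₁ (a x) * p₂ (b x) * N (lA (a x)) := by
        rw [← h4 x, mul_assoc, inv_mul_cancel₀ hN0, mul_one]
      have hQx : Q (b x) = (∑ α ∈ univ.filter (fun α => lA α = lA (a x)), p₁ α)
          * p₂ (b x) * N (lA (a x)) := by
        rw [← eQ, mul_assoc, inv_mul_cancel₀ hN0, mul_one]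
      rw [hx, eP, hQx]
      have : p₁ (a x) * (∑ β ∈ univ.filter (fun β => lB β = lA (a x)), p₂ β)
          * ((∑ α ∈ univ.filter (fun α => lA α = lA (a x)), p₁ α)
            * p₂ (b x) * N (lA (a x)))
          = ((∑ α ∈ univ.filter (fun α => lA α = lA (a x)), p₁ α)
            * (∑ β ∈ univ.filter (fun β => lB β = lA (a x)), p₂ β))
            * (p₁ (a x) * p₂ (b x) * N (lA (a x))) := by ring
      rw [this, eS, one_mul]
  tfae_have 6 → 7 := by
    intro h6 x
    by_cases hQ0 : Q (b x) = 0
    · have hp0 : p x = 0 := le_zero_iff.mp ((hQb x).trans hQ0.le)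
      simp [fpot, hp0, hQ0]
    · have hf : fpot Q (b x) = 1 := by simp [fpot, pos_iff_ne_zero, hQ0]
      rw [h6 x, hf, mul_one, mul_assoc, mul_inv_cancel₀ hQ0, mul_one]
  tfae_have 7 → 8 := by
    intro h7
    exact ⟨fun α => P α * (N (lA α))⁻¹, h7⟩
  tfae_have 8 → 1 := by
    rintro ⟨q, h8⟩
    refine ⟨q, Q, fun x => ?_⟩
    by_cases hQ0 : Q (b x) = 0
    · have hp0 : p x = 0 := le_zero_iff.mp ((hQb x).trans hQ0.le)
      rw [hp0, hQ0, mul_zero]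
    · have hf : fpot Q (b x) = 1 := by simp [fpot, pos_iff_ne_zero, hQ0]
      have h := h8 x
      rw [hf, mul_one] at h
      calc p x = p x * (Q (b x))⁻¹ * Q (b x) := by
            rw [mul_assoc, inv_mul_cancel₀ hQ0, mul_one]
        _ = q (a x) * Q (b x) := by rw [h]
  tfae_finish

/-- Equivalent characterizations of a factorization of a potential
`p` with `d(p) = Θ₁ ∨ Θ₂ ∨ Λ` over conditionally independent frames `Θ₁ ⊥ Θ₂ | Λ`. -/
theorem factorization_tfae (F : FCF) (Θ₁ Θ₂ Λ : F.Frame)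
    (hCI : F.CondIndep Θ₁ Θ₂ Λ)
    (p : F.Pot (F.sup (F.sup Θ₁ Θ₂) Λ))
    (hΛJ : F.le Λ (F.sup (F.sup Θ₁ Θ₂) Λ))
    (hAJ : F.le (F.sup Θ₁ Λ) (F.sup (F.sup Θ₁ Θ₂) Λ))
    (hBJ : F.le (F.sup Θ₂ Λ) (F.sup (F.sup Θ₁ Θ₂) Λ))
    (hAC : F.le (F.sup Θ₁ Λ) (F.sup Θ₁ (F.sup Θ₂ Λ)))
    (hBC : F.le (F.sup Θ₂ Λ) (F.sup Θ₁ (F.sup Θ₂ Λ))) :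
    List.TFAE
      [ -- (1) p = q₁ · q₂
        (∃ (q₁ : F.Pot (F.sup Θ₁ Λ)) (q₂ : F.Pot (F.sup Θ₂ Λ)),
          p = fun x => q₁ (F.proj hAJ x) * q₂ (F.proj hBJ x)),
        -- (2) p = p_{Θ₁|Λ} · p_{Θ₂|Λ} · π_Λ(p)
        (p = fun x => F.condl2 p Θ₁ Λ (F.proj hAJ x) *
            F.condl2 p Θ₂ Λ (F.proj hBJ x) * F.transport p Λ (F.proj hΛJ x)),
        -- (3) p_{Θ₁∨Θ₂|Λ} = p_{Θ₁|Λ} · p_{Θ₂|Λ}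
        (F.condl2 p (F.sup Θ₁ Θ₂) Λ =
          fun x => F.condl2 p Θ₁ Λ (F.proj hAJ x) * F.condl2 p Θ₂ Λ (F.proj hBJ x)),
        -- (4) p_{Θ₁∨Θ₂|Λ} = p₁ · p₂
        (∃ (p₁ : F.Pot (F.sup Θ₁ Λ)) (p₂ : F.Pot (F.sup Θ₂ Λ)),
          F.condl2 p (F.sup Θ₁ Θ₂) Λ =
            fun x => p₁ (F.proj hAJ x) * p₂ (F.proj hBJ x)),
        -- (5) p · π_Λ(p) = π_{Θ₁∨Λ}(p) · π_{Θ₂∨Λ}(p)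
        ((fun x => p x * F.transport p Λ (F.proj hΛJ x)) =
          fun x => F.transport p (F.sup Θ₁ Λ) (F.proj hAJ x) *
            F.transport p (F.sup Θ₂ Λ) (F.proj hBJ x)),
        -- (6) p = p_{Θ₁|Λ} · π_{Θ₂∨Λ}(p)
        (p = fun x => F.condl2 p Θ₁ Λ (F.proj hAJ x) *
            F.transport p (F.sup Θ₂ Λ) (F.proj hBJ x)),
        -- (7) p_{Θ₁|Θ₂∨Λ} = p_{Θ₁|Λ} · f_{π_{Θ₂∨Λ}(p)}
        (F.condl2 p Θ₁ (F.sup Θ₂ Λ) =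
          fun y => F.condl2 p Θ₁ Λ (F.proj hAC y) *
            fpot (F.transport p (F.sup Θ₂ Λ)) (F.proj hBC y)),
        -- (8) p_{Θ₁|Θ₂∨Λ} = q · f_{π_{Θ₂∨Λ}(p)}
        (∃ q : F.Pot (F.sup Θ₁ Λ),
          F.condl2 p Θ₁ (F.sup Θ₂ Λ) =
            fun y => q (F.proj hAC y) *
              fpot (F.transport p (F.sup Θ₂ Λ)) (F.proj hBC y)) ] := by
  classical
  have hΘ₁J : F.le Θ₁ (F.sup (F.sup Θ₁ Θ₂) Λ) :=
    F.le_trans (F.le_sup_left Θ₁ Θ₂) (F.le_sup_left (F.sup Θ₁ Θ₂) Λ)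
  have hΘ₂J : F.le Θ₂ (F.sup (F.sup Θ₁ Θ₂) Λ) :=
    F.le_trans (F.le_sup_right Θ₁ Θ₂) (F.le_sup_left (F.sup Θ₁ Θ₂) Λ)
  have hCJ : F.le (F.sup Θ₁ (F.sup Θ₂ Λ)) (F.sup (F.sup Θ₁ Θ₂) Λ) :=
    F.sup_le hΘ₁J (F.sup_le hΘ₂J hΛJ)
  have hJC : F.le (F.sup (F.sup Θ₁ Θ₂) Λ) (F.sup Θ₁ (F.sup Θ₂ Λ)) :=
    F.sup_le (F.sup_le (F.le_sup_left Θ₁ (F.sup Θ₂ Λ))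
        (F.le_trans (F.le_sup_left Θ₂ Λ) (F.le_sup_right Θ₁ (F.sup Θ₂ Λ))))
      (F.le_trans (F.le_sup_right Θ₂ Λ) (F.le_sup_right Θ₁ (F.sup Θ₂ Λ)))
  have hl : ∀ x, F.proj (F.le_sup_right Θ₁ Λ) (F.proj hAJ x)
      = F.proj (F.le_sup_right Θ₂ Λ) (F.proj hBJ x) := by
    intro x
    rw [proj_comp (F.le_sup_right Θ₁ Λ) hAJ hΛJ x,
        proj_comp (F.le_sup_right Θ₂ Λ) hBJ hΛJ x]
  have inj : ∀ x y : F.El (F.sup (F.sup Θ₁ Θ₂) Λ),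
      F.proj hAJ x = F.proj hAJ y → F.proj hBJ x = F.proj hBJ y → x = y := by
    intro x y e1 e2
    have eL : F.proj hΛJ x = F.proj hΛJ y := by
      rw [← proj_comp (F.le_sup_right Θ₁ Λ) hAJ hΛJ x,
          ← proj_comp (F.le_sup_right Θ₁ Λ) hAJ hΛJ y, e1]
    have eT : F.proj (F.le_sup_left (F.sup Θ₁ Θ₂) Λ) x
        = F.proj (F.le_sup_left (F.sup Θ₁ Θ₂) Λ) y := by
      refine sup_ext ?_ ?_
      · rw [proj_comp (F.le_sup_left Θ₁ Θ₂) (F.le_sup_left (F.sup Θ₁ Θ₂) Λ) hΘ₁J x,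
            proj_comp (F.le_sup_left Θ₁ Θ₂) (F.le_sup_left (F.sup Θ₁ Θ₂) Λ) hΘ₁J y,
            ← proj_comp (F.le_sup_left Θ₁ Λ) hAJ hΘ₁J x,
            ← proj_comp (F.le_sup_left Θ₁ Λ) hAJ hΘ₁J y, e1]
      · rw [proj_comp (F.le_sup_right Θ₁ Θ₂) (F.le_sup_left (F.sup Θ₁ Θ₂) Λ) hΘ₂J x,
            proj_comp (F.le_sup_right Θ₁ Θ₂) (F.le_sup_left (F.sup Θ₁ Θ₂) Λ) hΘ₂J y,
            ← proj_comp (F.le_sup_left Θ₂ Λ) hBJ hΘ₂J x,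
            ← proj_comp (F.le_sup_left Θ₂ Λ) hBJ hΘ₂J y, e2]
    exact sup_ext eT eL
  have joint : ∀ (α : F.El (F.sup Θ₁ Λ)) (β : F.El (F.sup Θ₂ Λ)),
      F.proj (F.le_sup_right Θ₁ Λ) α = F.proj (F.le_sup_right Θ₂ Λ) β →
        ∃ x, F.proj hAJ x = α ∧ F.proj hBJ x = β := by
    intro α β hαβ
    have hc1 : F.compat (F.proj (F.le_sup_left Θ₁ Λ) α) (F.proj (F.le_sup_right Θ₁ Λ) α) :=
      ⟨α, mem_tau_proj _ α, mem_tau_proj _ α⟩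
    have hc2 : F.compat (F.proj (F.le_sup_left Θ₂ Λ) β) (F.proj (F.le_sup_right Θ₁ Λ) α) :=
      ⟨β, mem_tau_proj _ β, by rw [hαβ]; exact mem_tau_proj _ β⟩
    obtain ⟨x, hx⟩ := (hCI (F.proj (F.le_sup_right Θ₁ Λ) α) (F.proj (F.le_sup_left Θ₁ Λ) α)
      (F.proj (F.le_sup_left Θ₂ Λ) β)).mpr ⟨hc1, hc2⟩
    refine ⟨x, ?_, ?_⟩
    · refine sup_ext ?_ ?_
      · rw [proj_comp (F.le_sup_left Θ₁ Λ) hAJ hΘ₁J x]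
        exact proj_eq_of_mem hΘ₁J hx.1.1
      · rw [proj_comp (F.le_sup_right Θ₁ Λ) hAJ hΛJ x]
        exact proj_eq_of_mem hΛJ hx.2
    · refine sup_ext ?_ ?_
      · rw [proj_comp (F.le_sup_left Θ₂ Λ) hBJ hΘ₂J x]
        exact proj_eq_of_mem hΘ₂J hx.1.2
      · rw [proj_comp (F.le_sup_right Θ₂ Λ) hBJ hΛJ x, ← hαβ]
        exact proj_eq_of_mem hΛJ hx.2
  have hN' : ∀ t, F.transport p Λ t = ∑ x ∈ Finset.univ.filter
      (fun x => F.proj (F.le_sup_right Θ₁ Λ) (F.proj hAJ x) = t), p x := by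
    intro t
    rw [transport_eq p hΛJ]
    congr 1
    ext x
    simp only [Finset.mem_filter, Finset.mem_univ, true_and]
    rw [proj_comp (F.le_sup_right Θ₁ Λ) hAJ hΛJ x]
  have key := abstract_tfae (F.proj hAJ) (F.proj hBJ)
    (F.proj (F.le_sup_right Θ₁ Λ)) (F.proj (F.le_sup_right Θ₂ Λ))
    (F.transport p (F.sup Θ₁ Λ)) (F.transport p (F.sup Θ₂ Λ)) (F.transport p Λ) p
    hl inj joint (fun α => transport_eq p hAJ α) (fun β => transport_eq p hBJ β) hN'
  have hNcomp : ∀ x, F.transport p Λ (F.proj hΛJ x)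
      = F.transport p Λ (F.proj (F.le_sup_right Θ₁ Λ) (F.proj hAJ x)) := by
    intro x
    rw [proj_comp (F.le_sup_right Θ₁ Λ) hAJ hΛJ x]
  have hC3 : ∀ x, F.condl2 p (F.sup Θ₁ Θ₂) Λ x
      = p x * (F.transport p Λ (F.proj (F.le_sup_right Θ₁ Λ) (F.proj hAJ x)))⁻¹ := by
    intro x
    show F.transport p (F.sup (F.sup Θ₁ Θ₂) Λ) x
        * (F.transport p Λ (F.proj (F.le_sup_right (F.sup Θ₁ Θ₂) Λ) x))⁻¹ = _
    rw [transport_self p x,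
        ← proj_comp (F.le_sup_right Θ₁ Λ) hAJ (F.le_sup_right (F.sup Θ₁ Θ₂) Λ) x]
  have hcondC : ∀ x, F.condl2 p Θ₁ (F.sup Θ₂ Λ) (F.proj hCJ x)
      = p x * (F.transport p (F.sup Θ₂ Λ) (F.proj hBJ x))⁻¹ := by
    intro x
    show F.transport p (F.sup Θ₁ (F.sup Θ₂ Λ)) (F.proj hCJ x)
        * (F.transport p (F.sup Θ₂ Λ)
            (F.proj (F.le_sup_right Θ₁ (F.sup Θ₂ Λ)) (F.proj hCJ x)))⁻¹ = _
    rw [transport_of_ge p hCJ hJC, proj_comp hJC hCJ (F.le_refl _) x, proj_refl,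
        proj_comp (F.le_sup_right Θ₁ (F.sup Θ₂ Λ)) hCJ hBJ x]
  have bridge : ∀ (r : F.Pot (F.sup Θ₁ Λ)) (x : F.El (F.sup (F.sup Θ₁ Θ₂) Λ)),
      (F.condl2 p Θ₁ (F.sup Θ₂ Λ) (F.proj hCJ x)
        = r (F.proj hAC (F.proj hCJ x))
          * fpot (F.transport p (F.sup Θ₂ Λ)) (F.proj hBC (F.proj hCJ x)))
      ↔ (p x * (F.transport p (F.sup Θ₂ Λ) (F.proj hBJ x))⁻¹
        = r (F.proj hAJ x) * fpot (F.transport p (F.sup Θ₂ Λ)) (F.proj hBJ x)) := by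
    intro r x
    rw [proj_comp hAC hCJ hAJ x, proj_comp hBC hCJ hBJ x, hcondC x]
  have e7 : (F.condl2 p Θ₁ (F.sup Θ₂ Λ) =
        fun y => F.condl2 p Θ₁ Λ (F.proj hAC y) *
          fpot (F.transport p (F.sup Θ₂ Λ)) (F.proj hBC y))
      ↔ (∀ x, p x * (F.transport p (F.sup Θ₂ Λ) (F.proj hBJ x))⁻¹
        = F.transport p (F.sup Θ₁ Λ) (F.proj hAJ x)
            * (F.transport p Λ (F.proj (F.le_sup_right Θ₁ Λ) (F.proj hAJ x)))⁻¹
          * fpot (F.transport p (F.sup Θ₂ Λ)) (F.proj hBJ x)) := by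
    rw [funext_iff]
    constructor
    · intro H x
      exact (bridge (F.condl2 p Θ₁ Λ) x).mp (H (F.proj hCJ x))
    · intro H y
      have h := (bridge (F.condl2 p Θ₁ Λ) (F.proj hJC y)).mpr (H (F.proj hJC y))
      rw [proj_comp hCJ hJC (F.le_refl _) y, proj_refl] at h
      exact h
  have e8 : (∃ q : F.Pot (F.sup Θ₁ Λ),
        F.condl2 p Θ₁ (F.sup Θ₂ Λ) =
          fun y => q (F.proj hAC y) *
            fpot (F.transport p (F.sup Θ₂ Λ)) (F.proj hBC y))
      ↔ (∃ q : F.Pot (F.sup Θ₁ Λ),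
        ∀ x, p x * (F.transport p (F.sup Θ₂ Λ) (F.proj hBJ x))⁻¹
          = q (F.proj hAJ x) * fpot (F.transport p (F.sup Θ₂ Λ)) (F.proj hBJ x)) := by
    refine exists_congr fun q => ?_
    rw [funext_iff]
    constructor
    · intro H x
      exact (bridge q x).mp (H (F.proj hCJ x))
    · intro H y
      have h := (bridge q (F.proj hJC y)).mpr (H (F.proj hJC y))
      rw [proj_comp hCJ hJC (F.le_refl _) y, proj_refl] at h
      exact h
  rw [e7, e8]
  simp only [funext_iff]
  simp only [hC3, hNcomp]
  exact key

end FCF
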